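/- Let X be a finite set with |X| = n, let 2 ≤ k ≤ n − 2, fix i ∈ X, and consider G(X,k) = ⟨℘_k(X), ℘_{k+1}(X), ⊂⟩ with the hyperplane X₂ = ℘_k(X∖{i}). Then the map a ↦ a ∖ {i} is an isomorphism from the reduct G(X,k)∖X₂ (whose points are {a ∈ ℘_k(X) : i ∈ a} and whose lines are {A ∈ ℘_{k+1}(X) : i ∈ A}) onto the combinatorial Grassmannian G(X∖{i}, k−1). -/
import Mathlib


/-- An incidence structure: a set of points, a set of lines (inside ambient types
`P` and `L`), and an incidence relation. -/
structure IncStr (P : Type*) (L : Type*) where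
  pts : Set P
  lns : Set L
  inc : P → L → Prop

namespace IncStr

variable {P L P' L' : Type*}

/-- Incidence only relates points of the structure with lines of the structure. -/
def Proper (K : IncStr P L) : Prop :=
  ∀ p l, K.inc p l → p ∈ K.pts ∧ l ∈ K.lns

/-- A partial linear space: two distinct points incident with two lines force the
lines to coincide. -/
def IsPLS (K : IncStr P L) : Prop :=
  K.Proper ∧
    ∀ a b A B, a ≠ b → K.inc a A → K.inc b A → K.inc a B → K.inc b B → A = B

/-- A subspace: whenever two distinct points of `H` are incident with a line, every
point incident with that line belongs to `H`. -/
def IsSubspace (K : IncStr P L) (H : Set P) : Prop :=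
  H ⊆ K.pts ∧
    ∀ a b A, a ∈ H → b ∈ H → a ≠ b → K.inc a A → K.inc b A →
      ∀ x, K.inc x A → x ∈ H

/-- A hyperplane: a proper subspace met by every line. -/
def IsHyperplane (K : IncStr P L) (H : Set P) : Prop :=
  K.IsSubspace H ∧ H ≠ K.pts ∧ ∀ A ∈ K.lns, ∃ x ∈ H, K.inc x A

/-- `L[H]`: the lines all of whose incident points lie in `H`. -/
def linesIn (K : IncStr P L) (H : Set P) : Set L :=
  {A ∈ K.lns | ∀ x, K.inc x A → x ∈ H}

/-- The restriction `K↾H`. -/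
def restrict (K : IncStr P L) (H : Set P) : IncStr P L where
  pts := H
  lns := K.linesIn H
  inc := fun p l => K.inc p l ∧ p ∈ H ∧ l ∈ K.linesIn H

/-- The reduct `K∖H`. -/
def reduct (K : IncStr P L) (H : Set P) : IncStr P L where
  pts := K.pts \ H
  lns := K.lns \ K.linesIn H
  inc := fun p l => K.inc p l ∧ p ∈ K.pts \ H ∧ l ∈ K.lns \ K.linesIn H

/-- The dual structure `K°`. -/
def dual (K : IncStr P L) : IncStr L P where
  pts := K.lns
  lns := K.pts
  inc := fun l p => K.inc p l

/-- The join `K₁ ⋊_∞ K₂` determined by a map `f = ∞` from (the ambient type of)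
lines of `K₁` to points of `K₂`. -/
def join (K₁ K₂ : IncStr P L) (f : L → P) : IncStr P L where
  pts := K₁.pts ∪ K₂.pts
  lns := K₁.lns ∪ K₂.lns
  inc := fun p l => K₁.inc p l ∨ K₂.inc p l ∨ (l ∈ K₁.lns ∧ p = f l)

/-- Condition (∗): a point of `K₁` incident with two lines of `K₁` having the same
image under `∞` forces the lines to coincide. -/
def StarCond (K₁ : IncStr P L) (f : L → P) : Prop :=
  ∀ x A B, K₁.inc x A → K₁.inc x B → f A = f B → A = B

/-- The rank of a point: the number of lines incident with it. -/
noncomputable def pointRank (K : IncStr P L) (p : P) : ℕ :=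
  {l | K.inc p l}.ncard

/-- The size of a line: the number of points incident with it. -/
noncomputable def lineSize (K : IncStr P L) (l : L) : ℕ :=
  {p | K.inc p l}.ncard

/-- A finite `(ν_ρ, β_κ)`-configuration. -/
def IsConfig (K : IncStr P L) (ν ρ β κ : ℕ) : Prop :=
  K.pts.Finite ∧ K.lns.Finite ∧ K.IsPLS ∧
  K.pts.ncard = ν ∧ K.lns.ncard = β ∧
  (∀ p ∈ K.pts, K.pointRank p = ρ) ∧
  (∀ l ∈ K.lns, K.lineSize l = κ)

/-- A binomial configuration of type `B(k,m)`. -/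
def IsBinomial (K : IncStr P L) (k m : ℕ) : Prop :=
  K.IsConfig ((m + k - 1).choose k) k ((m + k - 1).choose m) m

/-- `(fp, fl)` is an isomorphism of incidence structures: a pair of bijections
(on points and on lines) preserving and reflecting incidence. -/
def IsIso (K : IncStr P L) (K' : IncStr P' L') (fp : P → P') (fl : L → L') : Prop :=
  Set.BijOn fp K.pts K'.pts ∧ Set.BijOn fl K.lns K'.lns ∧
    ∀ p ∈ K.pts, ∀ l ∈ K.lns, (K.inc p l ↔ K'.inc (fp p) (fl l))

def Isomorphic (K : IncStr P L) (K' : IncStr P' L') : Prop :=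
  ∃ fp fl, IsIso K K' fp fl

/-- A formally disjoint (tagged) copy of an incidence structure. -/
def tag (K : IncStr P L) (b : Bool) : IncStr (P × Bool) (L × Bool) where
  pts := (fun p => (p, b)) '' K.pts
  lns := (fun l => (l, b)) '' K.lns
  inc := fun p l => K.inc p.1 l.1 ∧ p.2 = b ∧ l.2 = b

end IncStr

/-- The combinatorial Grassmannian `G(Y,k) = ⟨℘_k(Y), ℘_{k+1}(Y), ⊂⟩`. -/
def Gras {α : Type*} (Y : Finset α) (k : ℕ) : IncStr (Finset α) (Finset α) where
  pts := {a : Finset α | a ⊆ Y ∧ a.card = k}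
  lns := {A : Finset α | A ⊆ Y ∧ A.card = k + 1}
  inc := fun a A => a ⊆ Y ∧ a.card = k ∧ A ⊆ Y ∧ A.card = k + 1 ∧ a ⊂ A

/-- The combinatorial Veronesian `V(Y,k)`: points are multisets of size `k` with
elements in `Y`, lines are multisets of size `< k` with elements in `Y`, a point `f`
is incident with a line `e` iff `f = e·x^{k-|e|}` for some `x ∈ Y`. -/
def Ver {α : Type*} (Y : Finset α) (k : ℕ) : IncStr (Multiset α) (Multiset α) where
  pts := {f : Multiset α | (∀ x ∈ f, x ∈ Y) ∧ Multiset.card f = k}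
  lns := {e : Multiset α | (∀ x ∈ e, x ∈ Y) ∧ Multiset.card e < k}
  inc := fun f e =>
    (∀ x ∈ f, x ∈ Y) ∧ Multiset.card f = k ∧
    (∀ x ∈ e, x ∈ Y) ∧ Multiset.card e < k ∧
    ∃ x ∈ Y, f = e + Multiset.replicate (k - Multiset.card e) x

/-- for `|X| = n`, `2 ≤ k ≤ n - 2` and `i ∈ X`, the reduct
`G(X,k)∖X₂` (where `X₂ = ℘_k(X∖{i})`) has points `{a ∈ ℘_k(X) : i ∈ a}` and lines
`{A ∈ ℘_{k+1}(X) : i ∈ A}`, and `a ↦ a∖{i}` is an isomorphism of it onto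
`G(X∖{i}, k-1)`. -/
-- Auxiliary lemma: membership in `linesIn` for this hyperplane.
lemma gras_linesIn_iff {α : Type*} [Fintype α] [DecidableEq α] (k : ℕ) (hk1 : 2 ≤ k)
    (i : α) (A : Finset α) :
    A ∈ (Gras (Finset.univ : Finset α) k).linesIn {a : Finset α | a.card = k ∧ i ∉ a}
      ↔ A.card = k + 1 ∧ i ∉ A := by
  constructor
  · rintro ⟨hA, hall⟩
    obtain ⟨-, hcard⟩ := hA
    refine ⟨hcard, fun hi => ?_⟩
    -- pick j ∈ A, j ≠ i
    have h2 : 2 ≤ A.card := by omega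
    obtain ⟨j, hj, hji⟩ : ∃ j ∈ A, j ≠ i := by
      by_contra h
      push_neg at h
      have : A ⊆ {i} := fun x hx => Finset.mem_singleton.mpr (h x hx)
      have := Finset.card_le_card this
      simp at this; omega
    have hx : (Gras (Finset.univ : Finset α) k).inc (A.erase j) A := by
      refine ⟨Finset.subset_univ _, ?_, Finset.subset_univ _, hcard, ?_⟩
      · rw [Finset.card_erase_of_mem hj, hcard]; omega
      · exact Finset.erase_ssubset hj
    have := hall _ hx
    exact this.2 (Finset.mem_erase.mpr ⟨Ne.symm hji, hi⟩)
  · rintro ⟨hcard, hi⟩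
    refine ⟨⟨Finset.subset_univ _, hcard⟩, fun x hx => ?_⟩
    obtain ⟨-, hxk, -, -, hxA⟩ := hx
    exact ⟨hxk, fun hix => hi (hxA.subset hix)⟩

theorem statement11 {α : Type*} [Fintype α] [DecidableEq α] (n k : ℕ)
    (hn : Fintype.card α = n) (hk1 : 2 ≤ k) (hk2 : k ≤ n - 2) (i : α) :
    ((Gras (Finset.univ : Finset α) k).reduct {a : Finset α | a.card = k ∧ i ∉ a}).pts
      = {a : Finset α | a.card = k ∧ i ∈ a} ∧
    ((Gras (Finset.univ : Finset α) k).reduct {a : Finset α | a.card = k ∧ i ∉ a}).lns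
      = {A : Finset α | A.card = k + 1 ∧ i ∈ A} ∧
    IncStr.IsIso
      ((Gras (Finset.univ : Finset α) k).reduct {a : Finset α | a.card = k ∧ i ∉ a})
      (Gras (Finset.univ.erase i) (k - 1))
      (fun a => a.erase i) (fun A => A.erase i) := by
  have hpts : ((Gras (Finset.univ : Finset α) k).reduct
      {a : Finset α | a.card = k ∧ i ∉ a}).pts = {a : Finset α | a.card = k ∧ i ∈ a} := by
    ext a
    simp only [IncStr.reduct, Gras, Set.mem_diff, Set.mem_setOf_eq]
    constructor
    · rintro ⟨⟨-, hc⟩, h⟩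
      refine ⟨hc, by_contra fun hi => h ⟨hc, hi⟩⟩
    · rintro ⟨hc, hi⟩
      exact ⟨⟨Finset.subset_univ _, hc⟩, fun h => h.2 hi⟩
  have hlns : ((Gras (Finset.univ : Finset α) k).reduct
      {a : Finset α | a.card = k ∧ i ∉ a}).lns = {A : Finset α | A.card = k + 1 ∧ i ∈ A} := by
    ext A
    simp only [IncStr.reduct, Set.mem_diff, Set.mem_setOf_eq, gras_linesIn_iff k hk1 i]
    constructor
    · rintro ⟨⟨-, hc⟩, h⟩
      exact ⟨hc, by_contra fun hi => h ⟨hc, hi⟩⟩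
    · rintro ⟨hc, hi⟩
      exact ⟨⟨Finset.subset_univ _, hc⟩, fun h => h.2 hi⟩
  refine ⟨hpts, hlns, ?_, ?_, ?_⟩
  · -- BijOn on points
    rw [hpts]
    constructor
    · rintro a ⟨hc, hi⟩
      refine ⟨Finset.erase_subset_erase i (Finset.subset_univ a), ?_⟩
      rw [Finset.card_erase_of_mem hi, hc]
    constructor
    · rintro a ⟨hca, hia⟩ b ⟨hcb, hib⟩ h
      simp only at h
      have := congrArg (insert i) h
      rwa [Finset.insert_erase hia, Finset.insert_erase hib] at this
    · rintro b ⟨hb, hcb⟩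
      refine ⟨insert i b, ⟨?_, Finset.mem_insert_self i b⟩, ?_⟩
      · rw [Finset.card_insert_of_notMem (fun h => (Finset.mem_erase.mp (hb h)).1 rfl), hcb]
        omega
      · simp only
        rw [Finset.erase_insert (fun h => (Finset.mem_erase.mp (hb h)).1 rfl)]
  · -- BijOn on lines
    rw [hlns]
    constructor
    · rintro A ⟨hc, hi⟩
      refine ⟨Finset.erase_subset_erase i (Finset.subset_univ A), ?_⟩
      rw [Finset.card_erase_of_mem hi, hc]
      omega
    constructor
    · rintro a ⟨hca, hia⟩ b ⟨hcb, hib⟩ h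
      simp only at h
      have := congrArg (insert i) h
      rwa [Finset.insert_erase hia, Finset.insert_erase hib] at this
    · rintro B ⟨hB, hcB⟩
      refine ⟨insert i B, ⟨?_, Finset.mem_insert_self i B⟩, ?_⟩
      · rw [Finset.card_insert_of_notMem (fun h => (Finset.mem_erase.mp (hB h)).1 rfl), hcB]
        omega
      · simp only
        rw [Finset.erase_insert (fun h => (Finset.mem_erase.mp (hB h)).1 rfl)]
  · -- incidence
    intro a ha A hA
    rw [hpts] at ha; rw [hlns] at hA
    obtain ⟨hca, hia⟩ := ha
    obtain ⟨hcA, hiA⟩ := hA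
    simp only [IncStr.reduct, Gras, Set.mem_diff, Set.mem_setOf_eq, gras_linesIn_iff k hk1 i]
    constructor
    · rintro ⟨⟨-, -, -, -, hss⟩, -, -⟩
      refine ⟨Finset.erase_subset_erase i (Finset.subset_univ a), ?_,
        Finset.erase_subset_erase i (Finset.subset_univ A), ?_, ?_⟩
      · rw [Finset.card_erase_of_mem hia, hca]
      · rw [Finset.card_erase_of_mem hiA, hcA]; omega
      · refine lt_of_le_of_ne (Finset.erase_subset_erase i hss.subset) ?_
        intro h
        have := congrArg Finset.card h
        rw [Finset.card_erase_of_mem hia, Finset.card_erase_of_mem hiA, hca, hcA] at this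
        omega
    · rintro ⟨-, -, -, -, hss⟩
      have hsub : a ⊆ A := by
        intro x hx
        rcases eq_or_ne x i with rfl | hxi
        · exact hiA
        · exact Finset.erase_subset i A (hss.subset (Finset.mem_erase.mpr ⟨hxi, hx⟩))
      have hss' : a ⊂ A := lt_of_le_of_ne hsub (by
        intro h; rw [h] at hca; omega)
      exact ⟨⟨Finset.subset_univ _, hca, Finset.subset_univ _, hcA, hss'⟩,
        ⟨⟨Finset.subset_univ _, hca⟩, fun h => h.2 hia⟩,
        ⟨⟨Finset.subset_univ _, hcA⟩, fun h => ((gras_linesIn_iff k hk1 i A).mp h).2 hiA⟩⟩
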